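/- A Hofmann–Streicher universe in a presheaf topos PSh(C) satisfies realignment along any levelwise decidable proposition φ: for any small type B and any φ-partial small type A with a φ-partial isomorphism to B, there exists a small type A* isomorphic to B restricting strictly to A on φ. -/

import Mathlib

open CategoryTheory CategoryTheory.Limits

universe u


open CategoryTheory CategoryTheory.Limits Opposite

namespace HSRealign

variable {C : Type u} [SmallCategory C] {φ Γ : Cᵒᵖ ⥤ Type u}

/-- Pointwise pairing for the presheaf product. -/
noncomputable def pairEl {c : Cᵒᵖ} (γ : Γ.obj c) (u : φ.obj c) : (Γ ⨯ φ).obj c :=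
  yonedaEquiv (prod.lift (yonedaEquiv.symm γ) (yonedaEquiv.symm u))

lemma fst_pairEl {c : Cᵒᵖ} (γ : Γ.obj c) (u : φ.obj c) :
    (prod.fst : Γ ⨯ φ ⟶ Γ).app c (pairEl γ u) = γ := by
  rw [pairEl, ← yonedaEquiv_comp, prod.lift_fst, Equiv.apply_symm_apply]

lemma fst_app_injective (hsub : ∀ c : Cᵒᵖ, Subsingleton (φ.obj c)) (c : Cᵒᵖ) :
    Function.Injective ((prod.fst : Γ ⨯ φ ⟶ Γ).app c) := by
  intro p q hpq
  apply yonedaEquiv.symm.injective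
  apply Limits.prod.hom_ext
  · apply yonedaEquiv.injective
    rw [yonedaEquiv_comp, yonedaEquiv_comp, Equiv.apply_symm_apply, Equiv.apply_symm_apply]
    exact hpq
  · apply NatTrans.ext
    funext d
    ext x
    exact (hsub d).elim _ _

end HSRealign

namespace HSRealign

variable {C : Type u} [SmallCategory C] {φ Γ : Cᵒᵖ ⥤ Type u}
variable (hsub : ∀ c : Cᵒᵖ, Subsingleton (φ.obj c))
variable (hdec : ∀ c : Cᵒᵖ, Decidable (Nonempty (φ.obj c)))

/-- Abbreviation for the induced functor on categories of elements. -/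
noncomputable abbrev Fm : (Γ ⨯ φ).Elements ⥤ Γ.Elements :=
  CategoryOfElements.map (Limits.prod.fst : Γ ⨯ φ ⟶ Γ)

/-- Lift an element of `Γ` with nonempty `φ`-component to an element of `Γ ⨯ φ`. -/
noncomputable def lift (x : Γ.Elements) (h : Nonempty (φ.obj x.1)) : (Γ ⨯ φ).Elements :=
  ⟨x.1, pairEl x.2 h.some⟩

lemma Fm_obj_lift (x : Γ.Elements) (h : Nonempty (φ.obj x.1)) :
    (Fm (φ := φ)).obj (lift x h) = x := by
  refine Functor.Elements.ext _ _ rfl ?_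
  exact (FunctorToTypes.map_id_apply Γ _).trans (fst_pairEl x.2 h.some)

include hsub in
lemma lift_Fm_obj (z : (Γ ⨯ φ).Elements) (h : Nonempty (φ.obj ((Fm (φ := φ)).obj z).1)) :
    lift ((Fm (φ := φ)).obj z) h = z := by
  refine Functor.Elements.ext _ _ rfl ?_
  simp only [eqToHom_refl, FunctorToTypes.map_id_apply]
  refine (FunctorToTypes.map_id_apply (Γ ⨯ φ) _).trans ?_
  apply fst_app_injective hsub
  exact fst_pairEl (C := C) (φ := φ) (Γ := Γ) _ _

end HSRealign

namespace HSRealign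

variable {C : Type u} [SmallCategory C] {φ Γ : Cᵒᵖ ⥤ Type u}
variable (hdec : ∀ c : Cᵒᵖ, Decidable (Nonempty (φ.obj c)))
variable (B : Γ.Elements ⥤ Type u) (A : (Γ ⨯ φ).Elements ⥤ Type u)

/-- The object part of the realigned family. -/
noncomputable def A'obj (x : Γ.Elements) : Type u :=
  haveI := hdec x.1
  if h : Nonempty (φ.obj x.1) then A.obj (lift x h) else B.obj x

lemma A'obj_pos (x : Γ.Elements) (h : Nonempty (φ.obj x.1)) :
    A'obj hdec B A x = A.obj (lift x h) := by
  simp only [A'obj]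
  exact dif_pos h

lemma A'obj_neg (x : Γ.Elements) (h : ¬ Nonempty (φ.obj x.1)) :
    A'obj hdec B A x = B.obj x := by
  simp only [A'obj]
  exact dif_neg h

variable (iso : A ≅ Fm (φ := φ) ⋙ B)

/-- Pointwise comparison isomorphism between the realigned family and `B`. -/
noncomputable def jIso (x : Γ.Elements) : A'obj hdec B A x ≅ B.obj x :=
  haveI := hdec x.1
  if h : Nonempty (φ.obj x.1) then
    eqToIso (A'obj_pos hdec B A x h) ≪≫ iso.app (lift x h) ≪≫
      eqToIso (congrArg B.obj (Fm_obj_lift x h))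
  else eqToIso (A'obj_neg hdec B A x h)

lemma jIso_hom_eq (x : Γ.Elements) (h : Nonempty (φ.obj x.1)) (z : (Γ ⨯ φ).Elements)
    (e : lift x h = z) (e2 : (Fm (φ := φ)).obj z = x) :
    (jIso hdec B A iso x).hom
      = eqToHom (by rw [A'obj_pos hdec B A x h, e]) ≫ iso.hom.app z ≫
          eqToHom (congrArg B.obj e2) := by
  subst e
  simp only [jIso, dif_pos h, Iso.trans_hom, eqToIso.hom, Iso.app_hom, Category.assoc]

/-- The realigned family. -/
noncomputable def A' : Γ.Elements ⥤ Type u where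
  obj := A'obj hdec B A
  map {x y} f := (jIso hdec B A iso x).hom ≫ B.map f ≫ (jIso hdec B A iso y).inv
  map_id x := by simp
  map_comp {x y z} f g := by simp

end HSRealign

namespace HSRealign

variable {C : Type u} [SmallCategory C] {φ Γ : Cᵒᵖ ⥤ Type u}
variable (hsub : ∀ c : Cᵒᵖ, Subsingleton (φ.obj c))
variable (hdec : ∀ c : Cᵒᵖ, Decidable (Nonempty (φ.obj c)))
variable (B : Γ.Elements ⥤ Type u) (A : (Γ ⨯ φ).Elements ⥤ Type u)
variable (iso : A ≅ Fm (φ := φ) ⋙ B)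

lemma hne (z : (Γ ⨯ φ).Elements) : Nonempty (φ.obj ((Fm (φ := φ)).obj z).1) :=
  ⟨(prod.snd : Γ ⨯ φ ⟶ φ).app z.1 z.2⟩

include hsub in
lemma restrict_obj_eq (z : (Γ ⨯ φ).Elements) :
    (Fm (φ := φ) ⋙ A' hdec B A iso).obj z = A.obj z := by
  refine (A'obj_pos hdec B A _ (hne z)).trans (congrArg A.obj ?_)
  exact lift_Fm_obj hsub z (hne z)

include hsub in
lemma restrict_eq : Fm (φ := φ) ⋙ A' hdec B A iso = A := by
  refine CategoryTheory.Functor.ext (restrict_obj_eq hsub hdec B A iso) ?_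
  intro z w f
  refine (cancel_mono (jIso hdec B A iso ((Fm (φ := φ)).obj w)).hom).mp ?_
  have hz := jIso_hom_eq hdec B A iso ((Fm (φ := φ)).obj z) (hne z) z
    (lift_Fm_obj hsub z (hne z)) rfl
  have hw := jIso_hom_eq hdec B A iso ((Fm (φ := φ)).obj w) (hne w) w
    (lift_Fm_obj hsub w (hne w)) rfl
  show (A' hdec B A iso).map ((Fm (φ := φ)).map f) ≫ _ = _
  have hz' : (jIso hdec B A iso ((Fm (φ := φ)).obj z)).hom
      = eqToHom (restrict_obj_eq hsub hdec B A iso z) ≫ iso.hom.app z := by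
    rw [hz]; simp; rfl
  have hw' : (jIso hdec B A iso ((Fm (φ := φ)).obj w)).hom
      = eqToHom (restrict_obj_eq hsub hdec B A iso w) ≫ iso.hom.app w := by
    rw [hw]; simp; rfl
  simp only [A', hz', Category.assoc, eqToHom_trans_assoc, eqToHom_refl, Category.id_comp]
  simp only [Iso.inv_hom_id, Category.comp_id, hw', eqToHom_trans_assoc, eqToHom_refl,
    Category.id_comp]
  have hn := iso.hom.naturality f
  simp only [Functor.comp_map] at hn
  rw [← hw']
  simp only [Iso.inv_hom_id, Category.comp_id]
  simp only [← hn]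
  rw [hw']; erw [eqToHom_trans_assoc, eqToHom_refl, Category.id_comp]

end HSRealign


/-- Realignment for the Hofmann–Streicher universe of a presheaf topos, along a levelwise
decidable proposition `φ` (a levelwise decidable subterminal presheaf).

Small families over a presheaf `Γ` are presented à la Hofmann–Streicher as functors on the
category of elements of `Γ`; the restriction of a family to the context `Γ ∧ φ` (presented
as `Γ ⨯ φ`) is precomposition with the map on categories of elements induced by the
projection.  Given a family `B` over `Γ`, a family `A` over `Γ ⨯ φ` and an isomorphism
from `A` to the restriction of `B`, there is a family `A'` over `Γ` restricting *strictly*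
to `A`, together with an isomorphism `A' ≅ B` restricting to the given one. -/
theorem hofmann_streicher_realignment (C : Type u) [SmallCategory C]
    (φ Γ : Cᵒᵖ ⥤ Type u)
    (hsub : ∀ c : Cᵒᵖ, Subsingleton (φ.obj c))
    (hdec : ∀ c : Cᵒᵖ, Decidable (Nonempty (φ.obj c)))
    (B : Γ.Elements ⥤ Type u)
    (A : (Γ ⨯ φ).Elements ⥤ Type u)
    (iso : A ≅ CategoryOfElements.map (Limits.prod.fst : Γ ⨯ φ ⟶ Γ) ⋙ B) :
    ∃ (A' : Γ.Elements ⥤ Type u)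
      (h : CategoryOfElements.map (Limits.prod.fst : Γ ⨯ φ ⟶ Γ) ⋙ A' = A)
      (i : A' ≅ B),
      CategoryTheory.Functor.whiskerLeft
          (CategoryOfElements.map (Limits.prod.fst : Γ ⨯ φ ⟶ Γ)) i.hom
        = eqToHom h ≫ iso.hom := by
  refine ⟨HSRealign.A' hdec B A iso, HSRealign.restrict_eq hsub hdec B A iso,
    NatIso.ofComponents (HSRealign.jIso hdec B A iso) ?_, ?_⟩
  · intro x y f
    show (HSRealign.A' hdec B A iso).map f ≫ _ = _
    simp [HSRealign.A']
  · apply NatTrans.ext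
    funext z
    have hz' : (HSRealign.jIso hdec B A iso ((HSRealign.Fm (φ := φ)).obj z)).hom
        = eqToHom (HSRealign.restrict_obj_eq hsub hdec B A iso z) ≫ iso.hom.app z := by
      rw [HSRealign.jIso_hom_eq hdec B A iso ((HSRealign.Fm (φ := φ)).obj z)
        (HSRealign.hne z) z (HSRealign.lift_Fm_obj hsub z (HSRealign.hne z)) rfl]; simp; rfl
    simp [hz', eqToHom_app]
    exact hz'
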